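/- The influence function is submodular: for any subsets S ⊆ T of billboard slots and any slot b ∉ T, I(S ∪ {b}) − I(S) ≥ I(T ∪ {b}) − I(T). -/
import Mathlib


open Finset

noncomputable def infl {B T : Type} (D : Finset T) (Pr : B → T → ℝ) (S : Finset B) : ℝ :=
  ∑ t ∈ D, (1 - ∏ b ∈ S, (1 - Pr b t))

theorem infl_submodular {B T : Type} [DecidableEq B] (D : Finset T) (Pr : B → T → ℝ)
    (hPr : ∀ b t, 0 ≤ Pr b t ∧ Pr b t ≤ 1)
    {S T' : Finset B} (hST : S ⊆ T') {b : B} (hb : b ∉ T') :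
    infl D Pr (insert b T') - infl D Pr T' ≤ infl D Pr (insert b S) - infl D Pr S := by
  have hbS : b ∉ S := fun h => hb (hST h)
  unfold infl
  rw [← Finset.sum_sub_distrib, ← Finset.sum_sub_distrib]
  apply Finset.sum_le_sum
  intro t _
  rw [Finset.prod_insert hb, Finset.prod_insert hbS]
  ring_nf
  have h1 : ∏ x ∈ T', (1 - Pr x t) ≤ ∏ x ∈ S, (1 - Pr x t) := by
    rw [← Finset.prod_sdiff hST]
    have hd0 : 0 ≤ ∏ x ∈ T' \ S, (1 - Pr x t) :=
      Finset.prod_nonneg fun j _ => by linarith [(hPr j t).2]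
    have hd1 : ∏ x ∈ T' \ S, (1 - Pr x t) ≤ 1 :=
      Finset.prod_le_one (fun j _ => by linarith [(hPr j t).2])
        (fun j _ => by linarith [(hPr j t).1])
    have hs0 : 0 ≤ ∏ x ∈ S, (1 - Pr x t) :=
      Finset.prod_nonneg fun j _ => by linarith [(hPr j t).2]
    nlinarith
  nlinarith [(hPr b t).1, (hPr b t).2]
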